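/- For 0 < r₁, r₂ < 1 with r₁ ≠ r₂, define γ_±(r₁,r₂) = (2r₁r₂/(r₁ ± r₂)) · (ln((1+r₁)/(1−r₁)) ± ln((1+r₂)/(1−r₂))) / (ln((1+r₁)/(1−r₁)) · ln((1+r₂)/(1−r₂))). Then γ₊(r₁,r₂) ≠ γ₋(r₁,r₂). -/

import Mathlib

noncomputable def gammaP (r1 r2 : ℝ) : ℝ :=
  (2 * r1 * r2 / (r1 + r2)) *
    (Real.log ((1 + r1) / (1 - r1)) + Real.log ((1 + r2) / (1 - r2))) /
    (Real.log ((1 + r1) / (1 - r1)) * Real.log ((1 + r2) / (1 - r2)))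

noncomputable def gammaM (r1 r2 : ℝ) : ℝ :=
  (2 * r1 * r2 / (r1 - r2)) *
    (Real.log ((1 + r1) / (1 - r1)) - Real.log ((1 + r2) / (1 - r2))) /
    (Real.log ((1 + r1) / (1 - r1)) * Real.log ((1 + r2) / (1 - r2)))

lemma log_ratio_pos {r : ℝ} (hr : r ∈ Set.Ioo (0:ℝ) 1) :
    0 < Real.log ((1 + r) / (1 - r)) := by
  obtain ⟨h0, h1⟩ := hr
  apply Real.log_pos
  rw [lt_div_iff₀ (by linarith)]
  linarith

lemma key_ineq {r : ℝ} (hr : r ∈ Set.Ioo (0:ℝ) 1) :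
    Real.log ((1 + r) / (1 - r)) < 2 * r / (1 - r ^ 2) := by
  obtain ⟨h0, h1⟩ := hr
  set y : ℝ := (1 + r) / (1 - r) with hy
  have hy1 : 1 < y := by
    rw [hy, lt_div_iff₀ (by linarith)]; linarith
  have hy0 : 0 < y := by linarith
  have hL : 0 < Real.log y := Real.log_pos hy1
  have hs : Real.log y < Real.sinh (Real.log y) := Real.self_lt_sinh_iff.2 hL
  have hsinh : Real.sinh (Real.log y) = (y - 1 / y) / 2 := by
    rw [Real.sinh_eq, Real.exp_log hy0, Real.exp_neg, Real.exp_log hy0]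
    ring
  have hval : (y - 1 / y) / 2 = 2 * r / (1 - r ^ 2) := by
    rw [hy]
    have h2 : (1:ℝ) - r ≠ 0 := by linarith
    have h3 : (1:ℝ) + r ≠ 0 := by linarith
    have h4 : (1:ℝ) - r ^ 2 ≠ 0 := by nlinarith
    field_simp
    ring
  calc Real.log y < Real.sinh (Real.log y) := hs
    _ = 2 * r / (1 - r ^ 2) := by rw [hsinh, hval]

lemma hasDerivAt_G {x : ℝ} (hx : x ∈ Set.Ioo (0:ℝ) 1) :
    HasDerivAt (fun r : ℝ => Real.log ((1 + r) / (1 - r)) / r)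
      ((2 / (1 - x ^ 2) * x - Real.log ((1 + x) / (1 - x))) / x ^ 2) x := by
  have h0 : (0:ℝ) < x := hx.1
  have h1 : x < 1 := hx.2
  have h1m : (1:ℝ) - x ≠ 0 := by linarith
  have h1p : (1:ℝ) + x ≠ 0 := by linarith
  have hA : HasDerivAt (fun r : ℝ => 1 + r) 1 x := by
    simpa using (hasDerivAt_id x).const_add 1
  have hB : HasDerivAt (fun r : ℝ => 1 - r) (-1) x := by
    simpa using (hasDerivAt_id x).const_sub 1
  have hf : HasDerivAt (fun r : ℝ => (1 + r) / (1 - r)) (2 / (1 - x) ^ 2) x := by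
    have := hA.div hB h1m
    refine this.congr_deriv ?_
    ring
  have hlog := hf.log (div_ne_zero h1p h1m)
  have hG := hlog.div (hasDerivAt_id x) (ne_of_gt h0)
  refine hG.congr_deriv ?_
  have h1sq : (1:ℝ) - x ^ 2 ≠ 0 := by
    intro h; have : (1 - x) * (1 + x) = 0 := by nlinarith
    rcases mul_eq_zero.1 this with h' | h' <;> [exact h1m h'; exact h1p h']
  simp only [id]
  field_simp
  ring

lemma strictMono_G : StrictMonoOn (fun r : ℝ => Real.log ((1 + r) / (1 - r)) / r)
    (Set.Ioo (0:ℝ) 1) := by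
  apply strictMonoOn_of_deriv_pos (convex_Ioo 0 1)
  · exact fun x hx => (hasDerivAt_G hx).continuousAt.continuousWithinAt
  · intro x hx
    rw [interior_Ioo] at hx
    rw [(hasDerivAt_G hx).deriv]
    have hk := key_ineq hx
    obtain ⟨h0, h1⟩ := hx
    have h1sq : (0:ℝ) < 1 - x ^ 2 := by nlinarith
    have hnum : 0 < 2 / (1 - x ^ 2) * x - Real.log ((1 + x) / (1 - x)) := by
      have : 2 / (1 - x ^ 2) * x = 2 * x / (1 - x ^ 2) := by ring
      rw [this]; linarith
    positivity

theorem gammaP_ne_gammaM (r1 r2 : ℝ) (h1 : r1 ∈ Set.Ioo (0:ℝ) 1)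
    (h2 : r2 ∈ Set.Ioo (0:ℝ) 1) (hne : r1 ≠ r2) :
    gammaP r1 r2 ≠ gammaM r1 r2 := by
  obtain ⟨h10, h11⟩ := h1
  obtain ⟨h20, h21⟩ := h2
  set L1 := Real.log ((1 + r1) / (1 - r1)) with hL1
  set L2 := Real.log ((1 + r2) / (1 - r2)) with hL2
  have hL1p : 0 < L1 := log_ratio_pos ⟨h10, h11⟩
  have hL2p : 0 < L2 := log_ratio_pos ⟨h20, h21⟩
  intro heq
  have hsum : r1 + r2 ≠ 0 := by positivity
  have hdiff : r1 - r2 ≠ 0 := sub_ne_zero.2 hne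
  rw [gammaP, gammaM, ← hL1, ← hL2] at heq
  have hkey : L2 * r1 = L1 * r2 := by
    have h' : (L1 + L2) * (r1 - r2) = (L1 - L2) * (r1 + r2) := by
      have hr1 : r1 ≠ 0 := ne_of_gt h10
      have hr2 : r2 ≠ 0 := ne_of_gt h20
      have hc : 2 * r1 * r2 * (L1 * L2) ≠ 0 := by positivity
      field_simp at heq
      apply mul_left_cancel₀ hc
      linear_combination (2 * r1 * r2 * (L1 * L2)) * heq
    nlinarith [h']
  -- so L1 / r1 = L2 / r2, contradicting strict monotonicity
  rcases hne.lt_or_gt with hlt | hlt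
  · have := strictMono_G ⟨h10, h11⟩ ⟨h20, h21⟩ hlt
    simp only [← hL1, ← hL2] at this
    rw [div_lt_div_iff₀ h10 h20] at this
    nlinarith
  · have := strictMono_G ⟨h20, h21⟩ ⟨h10, h11⟩ hlt
    simp only [← hL1, ← hL2] at this
    rw [div_lt_div_iff₀ h20 h10] at this
    nlinarith
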